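/- There is a bijection between the set of 2×n Nurikabe grids and the set of quaternary strings of length n appearing in the shortest Ziggu solution; in particular both sets have cardinality 6·2^n - 3n - 5. -/

import Mathlib

/-- Orthogonal adjacency of cells in a `2 × n` grid. -/
def GridAdj {n : ℕ} (a b : Fin 2 × Fin n) : Prop :=
  (a.1 = b.1 ∧ (a.2.val + 1 = b.2.val ∨ b.2.val + 1 = a.2.val)) ∨
  (a.2 = b.2 ∧ a.1 ≠ b.1)

/-- A `2 × n` Nurikabe grid: the black cells (`c i j = true`) are edge-connected and
no `2 × 2` subgrid is entirely black. -/
def IsNurikabe {n : ℕ} (c : Fin 2 → Fin n → Bool) : Prop :=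
  (∀ a b : Fin 2 × Fin n, c a.1 a.2 = true → c b.1 b.2 = true →
    Relation.ReflTransGen (fun x y => GridAdj x y ∧ c y.1 y.2 = true) a b) ∧
  (∀ j : Fin n, ∀ h : j.val + 1 < n,
    ¬(c 0 j = true ∧ c 1 j = true ∧ c 0 ⟨j.val + 1, h⟩ = true ∧ c 1 ⟨j.val + 1, h⟩ = true))

/-- The core list of states (strings written as lists of digits, leftmost digit first). -/
def zigguCore : ℕ → List (List ℕ)
  | 0 => []
  | 1 => [[0], [1], [2], [3]]
  | n + 2 =>
      [0 :: List.replicate (n + 1) 3] ++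
      (zigguCore (n + 1)).reverse.map (fun w => 1 :: w) ++
      (zigguCore (n + 1)).map (fun w => 2 :: w) ++
      [List.replicate (n + 2) 3]

/-- The list of states on the shortest solution to a Ziggu puzzle with `n` digits. -/
def zigguShort : ℕ → List (List ℕ)
  | 0 => []
  | 1 => [[0], [1], [2], [3]]
  | n + 2 => (zigguShort (n + 1)).map (fun w => 0 :: w) ++ (zigguCore (n + 2)).tail


lemma core_length (n : ℕ) : (zigguCore (n+1)).length + 2 = 3 * 2 ^ (n+1) := by
  induction n with
  | zero => decide
  | succ m ih =>
    show (zigguCore (m+2)).length + 2 = _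
    rw [zigguCore]
    simp only [List.length_append, List.length_map, List.length_reverse,
      List.length_cons, List.length_nil]
    have e : (2:ℕ) ^ (m+2) = 2 * 2 ^ (m+1) := by ring
    omega

lemma core_tail_length (n : ℕ) :
    (zigguCore (n+2)).length = (zigguCore (n+2)).tail.length + 1 := by
  rw [zigguCore]; simp

lemma short_length (n : ℕ) : (zigguShort (n+1)).length + 3 * (n+1) + 5 = 6 * 2 ^ (n+1) := by
  induction n with
  | zero => decide
  | succ m ih =>
    show (zigguShort (m+2)).length + _ + 5 = _
    rw [zigguShort]
    have hc : (zigguCore (m+2)).length + 2 = 3 * 2 ^ (m+2) := core_length (m+1)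
    have hct : (zigguCore (m+2)).length = (zigguCore (m+2)).tail.length + 1 :=
      core_tail_length m
    have hs : (zigguShort (m+1)).length + 3 * (m+1) + 5 = 6 * 2 ^ (m+1) := ih
    simp only [List.length_append, List.length_map]
    have e : (2:ℕ) ^ (m+2) = 2 * 2 ^ (m+1) := by ring
    omega

lemma mem_core_shape (n : ℕ) : ∀ w ∈ zigguCore (n+2),
    (∃ v, w = 0 :: v) ∨ (∃ v ∈ zigguCore (n+1), w = 1 :: v) ∨
    (∃ v ∈ zigguCore (n+1), w = 2 :: v) ∨ w = 3 :: List.replicate (n+1) 3 := by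
  intro w hw
  rw [zigguCore] at hw
  simp only [List.mem_append, List.mem_map, List.mem_reverse, List.mem_singleton] at hw
  rcases hw with ((h | ⟨v, hv, rfl⟩) | ⟨v, hv, rfl⟩) | h
  · exact Or.inl ⟨_, h⟩
  · exact Or.inr (Or.inl ⟨v, hv, rfl⟩)
  · exact Or.inr (Or.inr (Or.inl ⟨v, hv, rfl⟩))
  · exact Or.inr (Or.inr (Or.inr (by rw [h]; rfl)))

lemma core_nodup (n : ℕ) : (zigguCore (n+1)).Nodup := by
  induction n with
  | zero => decide
  | succ m ih =>
    show (zigguCore (m+2)).Nodup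
    rw [zigguCore]
    have h1 : ((zigguCore (m+1)).reverse.map (fun w => 1 :: w)).Nodup :=
      (List.nodup_reverse.mpr ih).map (fun a b h => by injection h)
    have h2 : ((zigguCore (m+1)).map (fun w => 2 :: w)).Nodup :=
      ih.map (fun a b h => by injection h)
    have n1 : ([0 :: List.replicate (m+1) 3] ++
        (zigguCore (m+1)).reverse.map (fun w => 1 :: w)).Nodup := by
      refine (List.nodup_singleton _).append h1 ?_
      intro a ha hb
      simp only [List.mem_singleton] at ha
      simp only [List.mem_map, List.mem_reverse] at hb
      rcases hb with ⟨v, _, hv⟩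
      rw [ha] at hv; injection hv with h' _; omega
    have n2 : (([0 :: List.replicate (m+1) 3] ++
        (zigguCore (m+1)).reverse.map (fun w => 1 :: w)) ++
        (zigguCore (m+1)).map (fun w => 2 :: w)).Nodup := by
      refine n1.append h2 ?_
      intro a ha hb
      simp only [List.mem_append, List.mem_singleton, List.mem_map, List.mem_reverse] at ha hb
      rcases hb with ⟨v, _, hv⟩
      rcases ha with rfl | ⟨u, _, rfl⟩
      · injection hv with h' _; omega
      · injection hv with h' _; omega
    refine n2.append (List.nodup_singleton _) ?_
    intro a ha hb
    simp only [List.mem_append, List.mem_singleton, List.mem_map, List.mem_reverse] at ha hb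
    have h3 : List.replicate (m+2) 3 = 3 :: List.replicate (m+1) 3 := rfl
    rcases ha with (rfl | ⟨u, _, rfl⟩) | ⟨u, _, rfl⟩ <;>
      rw [h3] at hb <;> injection hb with h' _ <;> omega

lemma core_tail_head (n : ℕ) : ∀ w ∈ (zigguCore (n+2)).tail, ∃ d v, w = d :: v ∧ d ≠ 0 := by
  intro w hw
  rw [zigguCore] at hw
  simp only [List.append_assoc, List.singleton_append, List.cons_append, List.tail_cons,
    List.mem_append, List.mem_map, List.mem_reverse, List.mem_singleton,
    List.not_mem_nil, false_or] at hw
  rcases hw with ⟨v, _, hv⟩ | ⟨v, _, hv⟩ | rfl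
  · exact ⟨1, v, hv.symm, by omega⟩
  · exact ⟨2, v, hv.symm, by omega⟩
  · exact ⟨3, List.replicate (n+1) 3, rfl, by omega⟩

lemma short_nodup (n : ℕ) : (zigguShort (n+1)).Nodup := by
  induction n with
  | zero => decide
  | succ m ih =>
    show (zigguShort (m+2)).Nodup
    rw [zigguShort]
    refine (ih.map (fun a b h => by injection h)).append ((core_nodup (m+1)).tail) ?_
    intro a ha hb
    simp only [List.mem_map] at ha
    rcases ha with ⟨v, _, hv⟩
    rcases core_tail_head m a hb with ⟨d, u, rfl, hd⟩
    injection hv with h1 _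
    exact hd h1.symm


section Paths
variable {n : ℕ} {c : Fin 2 → Fin n → Bool}

abbrev NStep (c : Fin 2 → Fin n → Bool) : Fin 2 × Fin n → Fin 2 × Fin n → Prop :=
  fun x y => GridAdj x y ∧ c y.1 y.2 = true

@[simp] lemma fin_mk_val {n a : ℕ} (h : a < n) : ((⟨a, h⟩ : Fin n) : ℕ) = a := rfl

lemma fin2cases (i : Fin 2) : i = 0 ∨ i = 1 := by revert i; decide

lemma gridadj_symm {a b : Fin 2 × Fin n} (h : GridAdj a b) : GridAdj b a := by
  rcases h with ⟨h1, h2⟩ | ⟨h1, h2⟩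
  · exact Or.inl ⟨h1.symm, h2.symm⟩
  · exact Or.inr ⟨h1.symm, h2.symm⟩

lemma adj_col {a b : Fin 2 × Fin n} (h : GridAdj a b) :
    a.2.val = b.2.val ∨ a.2.val + 1 = b.2.val ∨ b.2.val + 1 = a.2.val := by
  rcases h with ⟨_, h2⟩ | ⟨h1, _⟩
  · exact Or.inr h2
  · exact Or.inl (by rw [h1])

lemma black_of_path {a b : Fin 2 × Fin n}
    (h : Relation.ReflTransGen (NStep c) a b) (ha : c a.1 a.2 = true) : c b.1 b.2 = true := by
  induction h with
  | refl => exact ha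
  | tail _ hs ih => exact hs.2

lemma path_symm {a b : Fin 2 × Fin n}
    (h : Relation.ReflTransGen (NStep c) a b) (ha : c a.1 a.2 = true) :
    Relation.ReflTransGen (NStep c) b a := by
  induction h with
  | refl => exact .refl
  | @tail x y hp hs ih =>
    exact Relation.ReflTransGen.head ⟨gridadj_symm hs.1, black_of_path hp ha⟩ ih

lemma occ_of_black {i : Fin 2} {j : Fin n} (h : c i j = true) :
    c 0 j = true ∨ c 1 j = true := by
  rcases fin2cases i with rfl | rfl
  · exact Or.inl h
  · exact Or.inr h

lemma ivt {a b : Fin 2 × Fin n}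
    (h : Relation.ReflTransGen (NStep c) a b) (ha : c a.1 a.2 = true) :
    ∀ (m : ℕ) (hm : m < n),
      ((a.2.val ≤ m ∧ m ≤ b.2.val) ∨ (b.2.val ≤ m ∧ m ≤ a.2.val)) →
      c 0 ⟨m, hm⟩ = true ∨ c 1 ⟨m, hm⟩ = true := by
  induction h with
  | refl =>
    intro m hm hb
    have he : a.2 = ⟨m, hm⟩ := Fin.ext (by show a.2.val = m; omega)
    rw [← he]
    exact occ_of_black ha
  | @tail x y hp hs ih =>
    intro m hm hb
    by_cases hmx : (a.2.val ≤ m ∧ m ≤ x.2.val) ∨ (x.2.val ≤ m ∧ m ≤ a.2.val)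
    · exact ih m hm hmx
    · have hc := adj_col hs.1
      have : m = y.2.val := by omega
      have he : y.2 = ⟨m, hm⟩ := Fin.ext (by show y.2.val = m; omega)
      rw [← he]
      exact occ_of_black hs.2

lemma crossing {a b : Fin 2 × Fin n}
    (h : Relation.ReflTransGen (NStep c) a b) (ha : c a.1 a.2 = true) :
    ∀ (m : ℕ) (hm : m + 1 < n), a.2.val ≤ m → m < b.2.val →
      ∃ i, c i ⟨m, by omega⟩ = true ∧ c i ⟨m + 1, hm⟩ = true := by
  induction h with
  | refl => intro m hm h1 h2; omega
  | @tail x y hp hs ih =>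
    intro m hm h1 h2
    by_cases hmx : m < x.2.val
    · exact ih m hm h1 hmx
    · have hc := adj_col hs.1
      have hx : x.2.val = m := by omega
      have hy : y.2.val = m + 1 := by omega
      rcases hs.1 with ⟨hrow, _⟩ | ⟨hcol, _⟩
      · refine ⟨x.1, ?_, ?_⟩
        · have he : x.2 = ⟨m, by omega⟩ := Fin.ext hx
          rw [← he]; exact black_of_path hp ha
        · have he : y.2 = ⟨m + 1, hm⟩ := Fin.ext hy
          rw [hrow, ← he]; exact hs.2
      · exfalso; rw [hcol] at hx; omega

lemma connected_of
    (hconv : ∀ j k m : Fin n, j.val ≤ m.val → m.val ≤ k.val →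
      (c 0 j = true ∨ c 1 j = true) → (c 0 k = true ∨ c 1 k = true) →
      (c 0 m = true ∨ c 1 m = true))
    (hlink : ∀ (m : ℕ) (hm : m + 1 < n),
      (c 0 ⟨m, by omega⟩ = true ∨ c 1 ⟨m, by omega⟩ = true) →
      (c 0 ⟨m + 1, hm⟩ = true ∨ c 1 ⟨m + 1, hm⟩ = true) →
      ∃ i, c i ⟨m, by omega⟩ = true ∧ c i ⟨m + 1, hm⟩ = true) :
    ∀ a b : Fin 2 × Fin n, c a.1 a.2 = true → c b.1 b.2 = true →
      Relation.ReflTransGen (NStep c) a b := by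
  have aux : ∀ d : ℕ, ∀ a b : Fin 2 × Fin n, c a.1 a.2 = true → c b.1 b.2 = true →
      b.2.val = a.2.val + d → Relation.ReflTransGen (NStep c) a b := by
    intro d
    induction d with
    | zero =>
      intro a b ha hb hd
      have he : a.2 = b.2 := Fin.ext (by omega)
      by_cases hi : a.1 = b.1
      · have : a = b := Prod.ext hi he
        rw [this]
      · exact Relation.ReflTransGen.single ⟨Or.inr ⟨he, hi⟩, hb⟩
    | succ d ih =>
      intro a b ha hb hd
      have hmlt : a.2.val + d + 1 < n := by omega
      set jm : Fin n := ⟨a.2.val + d, by omega⟩ with hjm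
      have hom : c 0 jm = true ∨ c 1 jm = true := by
        refine hconv a.2 b.2 jm (by simp [hjm]) (by simp [hjm]; omega)
          (occ_of_black ha) (occ_of_black hb)
      have hob : c 0 (⟨a.2.val + d + 1, hmlt⟩ : Fin n) = true ∨
          c 1 (⟨a.2.val + d + 1, hmlt⟩ : Fin n) = true := by
        have he : b.2 = ⟨a.2.val + d + 1, hmlt⟩ := Fin.ext (by show b.2.val = a.2.val + d + 1; omega)
        rw [← he]; exact occ_of_black hb
      obtain ⟨i, hi1, hi2⟩ := hlink (a.2.val + d) hmlt hom hob
      have p1 : Relation.ReflTransGen (NStep c) a (i, jm) := ih a (i, jm) ha hi1 (by simp [hjm])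
      have heb : b.2 = ⟨a.2.val + d + 1, hmlt⟩ := Fin.ext (by show b.2.val = a.2.val + d + 1; omega)
      have p2 : Relation.ReflTransGen (NStep c) a (i, b.2) := by
        refine p1.tail ⟨Or.inl ⟨rfl, Or.inl ?_⟩, ?_⟩
        · simp [hjm, heb]
        · show c i b.2 = true
          rw [heb]; exact hi2
      by_cases hib : i = b.1
      · have : (i, b.2) = b := Prod.ext hib rfl
        rwa [this] at p2
      · exact p2.tail ⟨Or.inr ⟨rfl, hib⟩, hb⟩
  intro a b ha hb
  rcases le_or_gt a.2.val b.2.val with hle | hlt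
  · exact aux (b.2.val - a.2.val) a b ha hb (by omega)
  · exact path_symm (aux (a.2.val - b.2.val) b a hb ha (by omega)) hb

end Paths

section Decode

def pat : Fin 3 → Fin 2 → Bool := ![![true, false], ![false, true], ![true, true]]

def compat (p q : Fin 3) : Bool := decide ((p = 2 ∨ q = 2 ∨ p = q) ∧ ¬(p = 2 ∧ q = 2))

lemma pat_occ (p : Fin 3) : pat p 0 = true ∨ pat p 1 = true := by revert p; decide

lemma pat_inj {p q : Fin 3} (h0 : pat p 0 = pat q 0) (h1 : pat p 1 = pat q 1) : p = q := by
  revert p q; decide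

lemma compat_row {p q : Fin 3} (h : compat p q = true) :
    ∃ i, pat p i = true ∧ pat q i = true := by revert p q; decide

lemma pat_full {p : Fin 3} (h0 : pat p 0 = true) (h1 : pat p 1 = true) : p = 2 := by
  revert p; decide

lemma compat_not22 : compat 2 2 = false := by decide

lemma compat_of_shared {p q : Fin 3} (h : ∃ i, pat p i = true ∧ pat q i = true)
    (h2 : ¬(p = 2 ∧ q = 2)) : compat p q = true := by revert p q; decide

def decode (n l : ℕ) (w : List (Fin 3)) : Fin 2 → Fin n → Bool :=
  fun i j => if h : l ≤ j.val ∧ j.val - l < w.length then pat (w.get ⟨j.val - l, h.2⟩) i else false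

lemma decode_in {n l : ℕ} {w : List (Fin 3)} {j : Fin n} (hl : l ≤ j.val)
    (hk : j.val - l < w.length) (i : Fin 2) :
    decode n l w i j = pat (w.get ⟨j.val - l, hk⟩) i := dif_pos ⟨hl, hk⟩

lemma decode_out {n l : ℕ} {w : List (Fin 3)} {j : Fin n}
    (h : ¬(l ≤ j.val ∧ j.val - l < w.length)) (i : Fin 2) :
    decode n l w i j = false := dif_neg h

lemma decode_occ_iff {n l : ℕ} {w : List (Fin 3)} {j : Fin n} :
    (decode n l w 0 j = true ∨ decode n l w 1 j = true) ↔
      (l ≤ j.val ∧ j.val < l + w.length) := by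
  constructor
  · intro h
    by_cases hin : l ≤ j.val ∧ j.val - l < w.length
    · omega
    · rw [decode_out hin 0, decode_out hin 1] at h
      simp at h
  · intro h
    have hk : j.val - l < w.length := by omega
    rw [decode_in h.1 hk 0, decode_in h.1 hk 1]
    exact pat_occ _

lemma decode_isNurikabe {n l : ℕ} {w : List (Fin 3)}
    (hchain : List.Chain' (fun p q => compat p q = true) w) (hlen : l + w.length ≤ n) :
    IsNurikabe (decode n l w) := by
  constructor
  · refine connected_of ?_ ?_
    · intro j k m hjm hmk hj hk
      rw [decode_occ_iff] at hj hk ⊢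
      omega
    · intro m hm h1 h2
      rw [decode_occ_iff] at h1 h2
      simp only [fin_mk_val] at h1 h2
      have hk1 : m - l < w.length := by omega
      have hk2 : m + 1 - l < w.length := by omega
      have hcc : compat (w.get ⟨m - l, hk1⟩) (w.get ⟨m + 1 - l, hk2⟩) = true := by
        have h' := List.isChain_iff_getElem.mp hchain (m - l) (by omega)
        have e : (⟨m + 1 - l, hk2⟩ : Fin w.length) = ⟨m - l + 1, by omega⟩ :=
          Fin.ext (show m + 1 - l = m - l + 1 by omega)
        rw [e]; exact h'
      obtain ⟨i, hi1, hi2⟩ := compat_row hcc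
      refine ⟨i, ?_, ?_⟩
      · rw [decode_in (j := (⟨m, by omega⟩ : Fin n)) (by exact h1.1) hk1]; exact hi1
      · rw [decode_in (j := (⟨m + 1, hm⟩ : Fin n)) (by show l ≤ m + 1; omega) hk2]; exact hi2
  · rintro j hj ⟨h1, h2, h3, h4⟩
    have o1 : decode n l w 0 j = true ∨ decode n l w 1 j = true := Or.inl h1
    have o2 : decode n l w 0 ⟨j.val + 1, hj⟩ = true ∨
        decode n l w 1 ⟨j.val + 1, hj⟩ = true := Or.inl h3
    rw [decode_occ_iff] at o1 o2
    simp only [fin_mk_val] at o1 o2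
    have hk1 : j.val - l < w.length := by omega
    have hk2 : j.val + 1 - l < w.length := by omega
    rw [decode_in o1.1 hk1] at h1 h2
    rw [decode_in (j := (⟨j.val + 1, hj⟩ : Fin n)) o2.1 hk2] at h3 h4
    have e1 : w.get ⟨j.val - l, hk1⟩ = 2 := pat_full h1 h2
    have e2 : w.get ⟨j.val + 1 - l, hk2⟩ = 2 := pat_full h3 h4
    have hcc : compat (w.get ⟨j.val - l, hk1⟩) (w.get ⟨j.val + 1 - l, hk2⟩) = true := by
      have h' := List.isChain_iff_getElem.mp hchain (j.val - l) (by omega)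
      have e : (⟨j.val + 1 - l, hk2⟩ : Fin w.length) = ⟨j.val - l + 1, by omega⟩ :=
        Fin.ext (show j.val + 1 - l = j.val - l + 1 by omega)
      rw [e]; exact h'
    rw [e1, e2, compat_not22] at hcc
    exact Bool.false_ne_true hcc

end Decode

section Words

lemma fin3cases (p : Fin 3) : p = 0 ∨ p = 1 ∨ p = 2 := by revert p; decide

def wds : ℕ → Finset (List (Fin 3))
  | 0 => ∅
  | 1 => {[0], [1], [2]}
  | (k+2) => (wds (k+1)).biUnion
      (fun w => (Finset.univ.filter (fun p => compat p w.headI = true)).image (fun p => p :: w))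

lemma mem_wds : ∀ (k : ℕ) (w : List (Fin 3)), w ∈ wds k ↔
    w.length = k ∧ w ≠ [] ∧ List.Chain' (fun p q => compat p q = true) w
  | 0, w => by
    rw [wds]
    simp only [Finset.notMem_empty, false_iff]
    rintro ⟨h1, h2, _⟩
    exact h2 (List.length_eq_zero_iff.mp h1)
  | 1, w => by
    rw [wds]
    constructor
    · intro h
      simp only [Finset.mem_insert, Finset.mem_singleton] at h
      rcases h with rfl | rfl | rfl <;> exact ⟨rfl, by simp, List.isChain_singleton _⟩
    · rintro ⟨h1, h2, h3⟩
      obtain ⟨p, hp⟩ := List.length_eq_one_iff.mp h1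
      subst hp
      rcases fin3cases p with rfl | rfl | rfl <;> decide
  | (k+2), w => by
    rw [wds]
    simp only [Finset.mem_biUnion, Finset.mem_image, Finset.mem_filter, Finset.mem_univ,
      true_and]
    constructor
    · rintro ⟨v, hv, p, hp, rfl⟩
      obtain ⟨hlen, hne, hch⟩ := (mem_wds (k+1) v).mp hv
      obtain ⟨hd, tl, rfl⟩ := List.exists_cons_of_ne_nil hne
      refine ⟨by simp only [List.length_cons] at hlen ⊢; omega, by simp, ?_⟩
      · refine List.isChain_cons_cons.mpr ?_
        exact ⟨by simpa using hp, hch⟩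
    · rintro ⟨h1, h2, h3⟩
      obtain ⟨p, v, rfl⟩ := List.exists_cons_of_ne_nil h2
      have hvne : v ≠ [] := by
        intro h; subst h; simp at h1
      obtain ⟨hd, tl, rfl⟩ := List.exists_cons_of_ne_nil hvne
      replace h3 := List.isChain_cons_cons.mp h3
      refine ⟨hd :: tl, (mem_wds (k+1) _).mpr ⟨by simp only [List.length_cons] at h1 ⊢; omega, by simp, h3.2⟩,
        p, by simpa using h3.1, rfl⟩

lemma card_wds (k : ℕ) : (wds (k+1)).card = 3 * 2 ^ k := by
  induction k with
  | zero => decide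
  | succ m ih =>
    show (wds (m+2)).card = _
    rw [wds]
    rw [Finset.card_biUnion]
    · have hone : ∀ w ∈ wds (m+1),
          ((Finset.univ.filter (fun p => compat p w.headI = true)).image (fun p => p :: w)).card
            = 2 := by
        intro w _
        rw [Finset.card_image_of_injective _ (fun p q h => by injection h)]
        have : ∀ q : Fin 3, (Finset.univ.filter (fun p => compat p q = true)).card = 2 := by
          decide
        exact this _
      rw [Finset.sum_congr rfl hone, Finset.sum_const, ih]
      ring
    · intro x hx y hy hxy
      simp only [Finset.disjoint_left, Finset.mem_image, Finset.mem_filter]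
      rintro a ⟨p, _, rfl⟩ ⟨q, _, hq⟩
      exact hxy (by injection hq.symm)

def wordsUpTo (m : ℕ) : Finset (List (Fin 3)) := (Finset.range (m+1)).biUnion wds

lemma mem_wordsUpTo (m : ℕ) (w : List (Fin 3)) : w ∈ wordsUpTo m ↔
    w.length ≤ m ∧ w ≠ [] ∧ List.Chain' (fun p q => compat p q = true) w := by
  unfold wordsUpTo
  simp only [Finset.mem_biUnion, Finset.mem_range]
  constructor
  · rintro ⟨k, hk, hw⟩
    obtain ⟨h1, h2, h3⟩ := (mem_wds k w).mp hw
    exact ⟨by omega, h2, h3⟩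
  · rintro ⟨h1, h2, h3⟩
    exact ⟨w.length, by omega, (mem_wds _ w).mpr ⟨rfl, h2, h3⟩⟩

lemma card_wordsUpTo (m : ℕ) : (wordsUpTo m).card + 3 = 3 * 2 ^ m := by
  induction m with
  | zero => decide
  | succ k ih =>
    have hsplit : wordsUpTo (k+1) = wds (k+1) ∪ wordsUpTo k := by
      unfold wordsUpTo
      rw [Finset.range_add_one, Finset.biUnion_insert]
    rw [hsplit, Finset.card_union_of_disjoint]
    · have := card_wds k
      have e : (2:ℕ) ^ (k+1) = 2 * 2 ^ k := by ring
      omega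
    · simp only [Finset.disjoint_left]
      intro a ha hb
      obtain ⟨h1, _, _⟩ := (mem_wds (k+1) a).mp ha
      obtain ⟨h2, _, _⟩ := (mem_wordsUpTo k a).mp hb
      omega

end Words

section Count
variable {n : ℕ}

def domainF (n : ℕ) : Finset (ℕ × List (Fin 3)) :=
  (Finset.range n).biUnion (fun l => (wordsUpTo (n - l)).image (fun w => (l, w)))

lemma mem_domainF (l : ℕ) (w : List (Fin 3)) : (l, w) ∈ domainF n ↔
    l < n ∧ w.length ≤ n - l ∧ w ≠ [] ∧ List.Chain' (fun p q => compat p q = true) w := by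
  unfold domainF
  simp only [Finset.mem_biUnion, Finset.mem_range, Finset.mem_image, Prod.mk.injEq]
  constructor
  · rintro ⟨l', hl', w', hw', rfl, rfl⟩
    obtain ⟨h1, h2, h3⟩ := (mem_wordsUpTo _ _).mp hw'
    exact ⟨hl', h1, h2, h3⟩
  · rintro ⟨h1, h2, h3, h4⟩
    exact ⟨l, h1, w, (mem_wordsUpTo _ _).mpr ⟨h2, h3, h4⟩, rfl, rfl⟩

lemma pow_sum (m : ℕ) : (∑ j ∈ Finset.range m, 2 ^ j) + 1 = 2 ^ m := by
  induction m with
  | zero => rfl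
  | succ k ih =>
    rw [Finset.sum_range_succ]
    have e : (2:ℕ) ^ (k+1) = 2 * 2 ^ k := by ring
    omega

lemma sum_aux (m : ℕ) :
    ∑ j ∈ Finset.range m, (6 * 2 ^ j - 3) + 3 * m = 6 * ∑ j ∈ Finset.range m, 2 ^ j := by
  induction m with
  | zero => rfl
  | succ k ihk =>
    rw [Finset.sum_range_succ, Finset.sum_range_succ]
    have hp : (1:ℕ) ≤ 2 ^ k := Nat.one_le_two_pow
    omega

lemma card_domainF (n : ℕ) : (domainF n).card + 3 * n + 6 = 6 * 2 ^ n := by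
  unfold domainF
  rw [Finset.card_biUnion]
  · have h1 : ∀ l ∈ Finset.range n, ((wordsUpTo (n - l)).image (fun w => (l, w))).card
        = (wordsUpTo (n - l)).card := fun l _ =>
      Finset.card_image_of_injective _ (fun a b h => by injection h)
    rw [Finset.sum_congr rfl h1]
    have h2 : ∀ l ∈ Finset.range n, (wordsUpTo (n - l)).card = 3 * 2 ^ (n - l) - 3 := by
      intro l _
      have := card_wordsUpTo (n - l)
      omega
    rw [Finset.sum_congr rfl h2]
    have h3 : ∑ l ∈ Finset.range n, (3 * 2 ^ (n - l) - 3)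
        = ∑ j ∈ Finset.range n, (3 * 2 ^ (j + 1) - 3) := by
      rw [← Finset.sum_range_reflect]
      refine Finset.sum_congr rfl ?_
      intro j hj
      simp only [Finset.mem_range] at hj
      have e : n - (n - 1 - j) = j + 1 := by omega
      rw [e]
    rw [h3]
    have h4 : ∀ j ∈ Finset.range n, 3 * 2 ^ (j + 1) - 3 = 6 * 2 ^ j - 3 := by
      intro j _
      have e : (2:ℕ) ^ (j+1) = 2 * 2 ^ j := by ring
      omega
    rw [Finset.sum_congr rfl h4]
    have h5 := sum_aux n
    have h6 := pow_sum n
    omega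
  · intro x hx y hy hxy
    simp only [Finset.disjoint_left, Finset.mem_image]
    rintro a ⟨w, _, rfl⟩ ⟨w', _, h⟩
    exact hxy (by injection h.symm)

def colpat (c : Fin 2 → Fin n → Bool) (j : Fin n) : Fin 3 :=
  if c 0 j = true then (if c 1 j = true then 2 else 0) else 1

lemma colpat_pat {c : Fin 2 → Fin n → Bool} {j : Fin n}
    (hocc : c 0 j = true ∨ c 1 j = true) (i : Fin 2) : pat (colpat c j) i = c i j := by
  rcases fin2cases i with rfl | rfl <;>
    cases hc0 : c 0 j <;> cases hc1 : c 1 j <;>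
      simp_all [colpat, pat, Matrix.vecHead, Matrix.vecTail]

lemma colpat_two {c : Fin 2 → Fin n → Bool} {j : Fin n} (h : colpat c j = 2) :
    c 0 j = true ∧ c 1 j = true := by
  by_cases hc0 : c 0 j = true <;> by_cases hc1 : c 1 j = true <;> simp_all [colpat]

def goodF (n : ℕ) : Finset (Fin 2 → Fin n → Bool) :=
  insert (fun _ _ => false) ((domainF n).image (fun x => decode n x.1 x.2))

lemma decode_ne_empty {x : ℕ × List (Fin 3)} (hx : x ∈ domainF n) :
    decode n x.1 x.2 ≠ (fun _ _ => false) := by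
  obtain ⟨l, w⟩ := x
  rw [mem_domainF] at hx
  obtain ⟨h1, h2, h3, _⟩ := hx
  intro h
  have hlt : l < n := h1
  have hocc : decode n l w 0 ⟨l, hlt⟩ = true ∨ decode n l w 1 ⟨l, hlt⟩ = true := by
    rw [decode_occ_iff]
    have : w.length ≠ 0 := fun hh => h3 (List.length_eq_zero_iff.mp hh)
    simp only [fin_mk_val]
    omega
  rcases hocc with hc | hc <;> rw [h] at hc <;> simp at hc

lemma decode_injOn : Set.InjOn (fun x : ℕ × List (Fin 3) => decode n x.1 x.2) (domainF n) := by
  rintro ⟨l, w⟩ hx ⟨l', w'⟩ hy h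
  simp only [Finset.coe_mem, Set.mem_setOf_eq] at *
  rw [Finset.mem_coe, mem_domainF] at hx hy
  obtain ⟨hl, hwlen, hwne, _⟩ := hx
  obtain ⟨hl', hwlen', hwne', _⟩ := hy
  have hw0 : 0 < w.length := List.length_pos_iff.mpr hwne
  have hw0' : 0 < w'.length := List.length_pos_iff.mpr hwne'
  have hocc : ∀ j : Fin n, (l ≤ j.val ∧ j.val < l + w.length) ↔
      (l' ≤ j.val ∧ j.val < l' + w'.length) := by
    intro j
    rw [← decode_occ_iff, ← decode_occ_iff, h]
  have hll : l = l' ∧ l + w.length = l' + w'.length := by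
    have e1 := (hocc ⟨l, by omega⟩).mp (by simp only [fin_mk_val]; omega)
    have e2 := (hocc ⟨l', by omega⟩).mpr (by simp only [fin_mk_val]; omega)
    have e3 := (hocc ⟨l + w.length - 1, by omega⟩).mp (by simp only [fin_mk_val]; omega)
    have e4 := (hocc ⟨l' + w'.length - 1, by omega⟩).mpr (by simp only [fin_mk_val]; omega)
    simp only [fin_mk_val] at e1 e2 e3 e4
    omega
  obtain ⟨rfl, hlen⟩ := hll
  have hlen' : w.length = w'.length := by omega
  have hww : w = w' := by
    refine List.ext_get hlen' ?_
    intro k hk hk'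
    have hjlt : l + k < n := by omega
    have hc : ∀ i, decode n l w i ⟨l + k, hjlt⟩ = decode n l w' i ⟨l + k, hjlt⟩ := by
      intro i; rw [h]
    have hd : ∀ i, pat (w.get ⟨k, hk⟩) i = pat (w'.get ⟨k, hk'⟩) i := by
      intro i
      have hb : l ≤ l + k := by omega
      have hb2 : l + k - l < w.length := by omega
      have hb2' : l + k - l < w'.length := by omega
      have r1 := decode_in (n := n) (l := l) (w := w) (j := ⟨l + k, hjlt⟩)
        (by simp only [fin_mk_val]; omega) (by simp only [fin_mk_val]; omega) i
      have r2 := decode_in (n := n) (l := l) (w := w') (j := ⟨l + k, hjlt⟩)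
        (by simp only [fin_mk_val]; omega) (by simp only [fin_mk_val]; omega) i
      have hci := hc i
      rw [r1, r2] at hci
      have ei : (⟨(⟨l + k, hjlt⟩ : Fin n).val - l, by simp only [fin_mk_val]; omega⟩ :
          Fin w.length) = ⟨k, hk⟩ := Fin.ext (show (l + k) - l = k by omega)
      have ei' : (⟨(⟨l + k, hjlt⟩ : Fin n).val - l, by simp only [fin_mk_val]; omega⟩ :
          Fin w'.length) = ⟨k, hk'⟩ := Fin.ext (show (l + k) - l = k by omega)
      rw [ei, ei'] at hci
      exact hci
    exact pat_inj (hd 0) (hd 1)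
  exact Prod.ext rfl hww
end Count

section Surj
variable {n : ℕ} {c : Fin 2 → Fin n → Bool}

lemma nurikabe_mem_goodF (h : IsNurikabe c) : c ∈ goodF n := by
  by_cases hemp : c = (fun _ _ => false)
  · subst hemp; exact Finset.mem_insert_self _ _
  · have hex : ∃ i j, c i j = true := by
      by_contra hno
      push_neg at hno
      apply hemp
      funext i j
      cases hcc : c i j
      · rfl
      · exact absurd hcc (hno i j)
    obtain ⟨i0, j0, hij⟩ := hex
    have hn0 : 0 < n := j0.pos
    set occF : Finset (Fin n) := Finset.univ.filter (fun j => c 0 j = true ∨ c 1 j = true)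
      with hoccF
    have hmemoccF : ∀ j : Fin n, j ∈ occF ↔ (c 0 j = true ∨ c 1 j = true) := by
      intro j; simp [hoccF]
    have hne : occF.Nonempty := ⟨j0, (hmemoccF j0).mpr (occ_of_black hij)⟩
    set l := occF.min' hne with hl
    set r := occF.max' hne with hr
    have hlocc : c 0 l = true ∨ c 1 l = true := (hmemoccF l).mp (occF.min'_mem hne)
    have hrocc : c 0 r = true ∨ c 1 r = true := (hmemoccF r).mp (occF.max'_mem hne)
    have hlr : l.val ≤ r.val := Finset.min'_le _ _ (occF.max'_mem hne)
    obtain ⟨ia, ha⟩ : ∃ i, c i l = true := by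
      rcases hlocc with hb | hb; exacts [⟨0, hb⟩, ⟨1, hb⟩]
    obtain ⟨ib, hbk⟩ : ∃ i, c i r = true := by
      rcases hrocc with hb | hb; exacts [⟨0, hb⟩, ⟨1, hb⟩]
    have hpath := h.1 (ia, l) (ib, r) ha hbk
    have hconv : ∀ j : Fin n, l.val ≤ j.val → j.val ≤ r.val →
        (c 0 j = true ∨ c 1 j = true) := by
      intro j h1 h2
      have hres := ivt hpath ha j.val j.isLt (Or.inl ⟨h1, h2⟩)
      have he : (⟨j.val, j.isLt⟩ : Fin n) = j := Fin.ext rfl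
      rwa [he] at hres
    have hmemocc : ∀ j : Fin n, (c 0 j = true ∨ c 1 j = true) →
        l.val ≤ j.val ∧ j.val ≤ r.val := by
      intro j hj
      exact ⟨Finset.min'_le _ _ ((hmemoccF j).mpr hj), Finset.le_max' _ _ ((hmemoccF j).mpr hj)⟩
    have hlink : ∀ (m : ℕ) (hm : m + 1 < n), l.val ≤ m → m + 1 ≤ r.val →
        ∃ i, c i ⟨m, by omega⟩ = true ∧ c i ⟨m + 1, hm⟩ = true := by
      intro m hm h1 h2
      exact crossing hpath ha m hm h1 (by show m < r.val; omega)
    set w : List (Fin 3) := List.ofFn (n := r.val - l.val + 1)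
      (fun t => colpat c ⟨l.val + t.val, by have h1 := t.isLt; have h2 := r.isLt; omega⟩)
      with hw
    have hwlen : w.length = r.val - l.val + 1 := by rw [hw]; exact List.length_ofFn
    have hwget : ∀ (k : ℕ) (hk : k < w.length) (hkn : l.val + k < n),
        w.get ⟨k, hk⟩ = colpat c ⟨l.val + k, hkn⟩ := by
      intro k hk hkn
      exact List.get_ofFn _ ⟨k, hk⟩
    have hchain : List.Chain' (fun p q => compat p q = true) w := by
      refine List.isChain_iff_getElem.mpr ?_
      intro t ht
      rw [show w[t] = w.get ⟨t, by omega⟩ from rfl, show w[t+1] = w.get ⟨t+1, by omega⟩ from rfl]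
      have hb1 : l.val + t + 1 ≤ r.val := by omega
      have hb2 : l.val + t + 1 < n := by have := r.isLt; omega
      rw [hwget t (by omega) (by omega), hwget (t + 1) (by omega) (by omega)]
      apply compat_of_shared
      · obtain ⟨i, hi1, hi2⟩ := hlink (l.val + t) hb2 (by omega) hb1
        refine ⟨i, ?_, ?_⟩
        · rw [colpat_pat (hconv _ (by simp only [fin_mk_val]; omega)
            (by simp only [fin_mk_val]; omega)) i]
          exact hi1
        · rw [colpat_pat (hconv _ (by simp only [fin_mk_val]; omega)
            (by simp only [fin_mk_val]; omega)) i]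
          exact hi2
      · rintro ⟨h2a, h2b⟩
        have hA := colpat_two h2a
        have hB := colpat_two h2b
        exact h.2 ⟨l.val + t, by omega⟩ hb2 ⟨hA.1, hA.2, hB.1, hB.2⟩
    have hdec : decode n l.val w = c := by
      funext i j
      by_cases hin : l.val ≤ j.val ∧ j.val - l.val < w.length
      · rw [decode_in hin.1 hin.2, hwget _ _ (by omega)]
        have he : (⟨l.val + (j.val - l.val), by omega⟩ : Fin n) = j :=
          Fin.ext (show l.val + (j.val - l.val) = j.val by omega)
        rw [he, colpat_pat (hconv j (by omega) (by omega)) i]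
      · rw [decode_out hin]
        cases hcc : c i j
        · rfl
        · exfalso
          have := hmemocc j (occ_of_black hcc)
          omega
    refine Finset.mem_insert_of_mem (Finset.mem_image.mpr ⟨(l.val, w), ?_, hdec⟩)
    rw [mem_domainF]
    have := r.isLt
    refine ⟨l.isLt, by omega, ?_, hchain⟩
    intro hnil
    rw [hnil] at hwlen
    simp at hwlen

lemma goodF_isNurikabe (hc : c ∈ goodF n) : IsNurikabe c := by
  rcases Finset.mem_insert.mp hc with rfl | hmem
  · constructor
    · intro a b ha _
      simp at ha
    · rintro j hj ⟨h1, _⟩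
      simp at h1
  · obtain ⟨x, hx, rfl⟩ := Finset.mem_image.mp hmem
    obtain ⟨l, w⟩ := x
    rw [mem_domainF] at hx
    exact decode_isNurikabe (n := n) (l := l) (w := w) hx.2.2.2 (by omega)

end Surj

lemma nurikabe_card (n : ℕ) :
    Nat.card {c : Fin 2 → Fin n → Bool // IsNurikabe c} + 3 * n + 5 = 6 * 2 ^ n := by
  have hiff : ∀ c : Fin 2 → Fin n → Bool, IsNurikabe c ↔ c ∈ goodF n :=
    fun c => ⟨nurikabe_mem_goodF, goodF_isNurikabe⟩
  have e := Nat.card_congr (Equiv.subtypeEquivRight hiff)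
  rw [e, Nat.card_eq_fintype_card, Fintype.card_coe]
  have hgc : (goodF n).card = (domainF n).card + 1 := by
    unfold goodF
    rw [Finset.card_insert_of_notMem, Finset.card_image_of_injOn decode_injOn]
    intro hmem
    obtain ⟨x, hx, hxe⟩ := Finset.mem_image.mp hmem
    exact decode_ne_empty hx hxe
  have := card_domainF n
  omega


theorem nurikabe_ziggu_bijection (n : ℕ) (hn : 1 ≤ n) :
    Nonempty ({c : Fin 2 → Fin n → Bool // IsNurikabe c} ≃
      {w : List ℕ // w ∈ zigguShort n}) ∧
    Nat.card {c : Fin 2 → Fin n → Bool // IsNurikabe c} = 6 * 2 ^ n - 3 * n - 5 ∧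
    (zigguShort n).length = 6 * 2 ^ n - 3 * n - 5 := by
  obtain ⟨m, rfl⟩ : ∃ m, n = m + 1 := ⟨n - 1, by omega⟩
  have hA := nurikabe_card (m + 1)
  have hB := short_length m
  have hnodup := short_nodup m
  have epair : {w : List ℕ // w ∈ zigguShort (m + 1)} ≃ ↥(zigguShort (m + 1)).toFinset :=
    Equiv.subtypeEquivRight (fun w => (List.mem_toFinset (a := w)).symm)
  have e1 : Nat.card {w : List ℕ // w ∈ zigguShort (m + 1)} = (zigguShort (m + 1)).length := by
    rw [Nat.card_congr epair, Nat.card_eq_fintype_card, Fintype.card_coe,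
      List.toFinset_card_of_nodup hnodup]
  have hfin : Finite {w : List ℕ // w ∈ zigguShort (m + 1)} := Finite.of_equiv _ epair.symm
  have hpow : (1:ℕ) ≤ 2 ^ (m + 1) := Nat.one_le_two_pow
  refine ⟨?_, by omega, by omega⟩
  rw [← Finite.card_eq]
  omega
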